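/- Fix j ∈ {1,…,d} and assume Σ_{jj} > 0. Suppose (π; ν_1,…,ν_d) satisfies the basic adjoint relationship (BAR) for (Σ, μ, R). Then: (i) π({x ∈ ℝ₊^d : x_j = 0}) = 0; and (ii) for every θ ∈ ℝ^d with θ ≤ 0 componentwise, the limit lim_{t→-∞} -( (1/2) Σ_{jj} t + μ_j ) φ(θ[t]) exists and equals R_{jj} φ_j(θ), where θ[t] denotes the vector equal to θ except that its j-th coordinate is replaced by t. -/

import Mathlib

open Matrix MeasureTheory Filter Topology

variable {d : ℕ}

lemma bar_update_eq_add_single (θ : Fin d → ℝ) (j : Fin d) (t : ℝ) :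
    Function.update θ j t = Function.update θ j 0 + t • (Pi.single j 1 : Fin d → ℝ) := by
  funext k
  by_cases h : k = j
  · subst h; simp
  · simp [Function.update_apply, h, Pi.single_apply]

lemma bar_update_dot (θ x : Fin d → ℝ) (j : Fin d) (t : ℝ) :
    Function.update θ j t ⬝ᵥ x = Function.update θ j 0 ⬝ᵥ x + t * x j := by
  rw [bar_update_eq_add_single, add_dotProduct, smul_dotProduct,
    single_dotProduct, smul_eq_mul, one_mul]

lemma bar_cont (θ : Fin d → ℝ) : Continuous fun x : Fin d → ℝ => Real.exp (θ ⬝ᵥ x) := by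
  refine Real.continuous_exp.comp ?_
  exact continuous_finset_sum _ fun i _ => continuous_const.mul (continuous_apply i)

lemma bar_ae_nonneg {m : Measure (Fin d → ℝ)} (hm : m {x | ¬ ∀ i, 0 ≤ x i} = 0) :
    ∀ᵐ x ∂m, ∀ i, 0 ≤ x i := by
  rw [MeasureTheory.ae_iff]; exact hm

lemma bar_exp_le_one {θ x : Fin d → ℝ} (hθ : ∀ i, θ i ≤ 0) (hx : ∀ i, 0 ≤ x i) :
    Real.exp (θ ⬝ᵥ x) ≤ 1 := by
  rw [Real.exp_le_one_iff]
  exact Finset.sum_nonpos fun i _ => mul_nonpos_of_nonpos_of_nonneg (hθ i) (hx i)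

lemma bar_inv_tendsto : Tendsto (fun t : ℝ => t⁻¹) atBot (𝓝 0) := by
  have h := (tendsto_inv_atTop_zero (𝕜 := ℝ)).comp tendsto_neg_atBot_atTop
  simpa [Function.comp, inv_neg] using h.neg

lemma bar_update_le {θ : Fin d → ℝ} (hθ : ∀ i, θ i ≤ 0) {j : Fin d} {t : ℝ} (ht : t ≤ 0) :
    ∀ i, Function.update θ j t i ≤ 0 := by
  intro i
  rcases eq_or_ne i j with rfl | h
  · simpa using ht
  · simpa [Function.update_apply, h] using hθ i

lemma bar_norm_int_le (m : Measure (Fin d → ℝ)) [IsFiniteMeasure m]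
    (hm : m {x | ¬ ∀ i, 0 ≤ x i} = 0) {θ : Fin d → ℝ} (hθ : ∀ i, θ i ≤ 0) :
    ‖∫ x, Real.exp (θ ⬝ᵥ x) ∂m‖ ≤ (m Set.univ).toReal := by
  have h := norm_integral_le_of_norm_le_const (μ := m) (C := 1)
    (f := fun x => Real.exp (θ ⬝ᵥ x)) ?_
  · simpa [measureReal_def] using h
  · filter_upwards [bar_ae_nonneg hm] with x hx
    rw [Real.norm_eq_abs, abs_of_pos (Real.exp_pos _)]
    exact bar_exp_le_one hθ hx

lemma bar_tendsto_int_update (m : Measure (Fin d → ℝ)) [IsFiniteMeasure m]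
    (hm : m {x | ¬ ∀ i, 0 ≤ x i} = 0) (θ : Fin d → ℝ) (hθ : ∀ i, θ i ≤ 0) (j : Fin d) :
    Tendsto (fun t => ∫ x, Real.exp (Function.update θ j t ⬝ᵥ x) ∂m) atBot
      (𝓝 (∫ x, Set.indicator {y : Fin d → ℝ | y j = 0}
        (fun y => Real.exp (Function.update θ j 0 ⬝ᵥ y)) x ∂m)) := by
  apply tendsto_integral_filter_of_dominated_convergence (fun _ => (1:ℝ))
  · exact Eventually.of_forall fun t => (bar_cont _).aestronglyMeasurable
  · filter_upwards [eventually_le_atBot (0:ℝ)] with t ht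
    filter_upwards [bar_ae_nonneg hm] with x hx
    rw [Real.norm_eq_abs, abs_of_pos (Real.exp_pos _)]
    exact bar_exp_le_one (bar_update_le hθ ht) hx
  · exact integrable_const 1
  · filter_upwards [bar_ae_nonneg hm] with x hx
    have key : ∀ t : ℝ, Real.exp (Function.update θ j t ⬝ᵥ x)
        = Real.exp (Function.update θ j 0 ⬝ᵥ x) * Real.exp (t * x j) := fun t => by
      rw [bar_update_dot, Real.exp_add]
    refine Tendsto.congr (fun t => (key t).symm) ?_
    rcases eq_or_lt_of_le (hx j) with h0 | hpos
    · have hmem : x ∈ {y : Fin d → ℝ | y j = 0} := by simpa using h0.symm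
      rw [Set.indicator_of_mem hmem]
      simp only [← h0, mul_zero, Real.exp_zero, mul_one]
      exact tendsto_const_nhds
    · have hmem : x ∉ {y : Fin d → ℝ | y j = 0} := by simpa using hpos.ne'
      rw [Set.indicator_of_notMem hmem]
      have h2 : Tendsto (fun t : ℝ => Real.exp (t * x j)) atBot (𝓝 0) :=
        Real.tendsto_exp_atBot.comp (tendsto_id.atBot_mul_const hpos)
      simpa using tendsto_const_nhds.mul h2


/-- Suppose `(π; ν_1,…,ν_d)` satisfies the basic adjoint relationship
(BAR) for `(Σ, μ, R)`, and fix `j` with `Σ_{jj} > 0`. Then (i) `π({x : x_j = 0}) = 0`,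
and (ii) for every `θ ≤ 0` componentwise,
`lim_{t→-∞} -((1/2)Σ_{jj} t + μ_j) φ(θ[t]) = R_{jj} φ_j(θ)`, where `θ[t]` is `θ` with
its `j`-th coordinate replaced by `t`. -/
theorem statement13 (d : ℕ) (hd : 1 ≤ d)
    (S : Matrix (Fin d) (Fin d) ℝ) (hSsymm : S.IsSymm)
    (μ : Fin d → ℝ) (R : Matrix (Fin d) (Fin d) ℝ)
    (π : Measure (Fin d → ℝ)) [IsProbabilityMeasure π]
    (hπsupp : π {x : Fin d → ℝ | ¬ ∀ i, 0 ≤ x i} = 0)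
    (ν : Fin d → Measure (Fin d → ℝ))
    (hνfin : ∀ i, IsFiniteMeasure (ν i))
    (hνne : ∀ i, ν i ≠ 0)
    (hνsupp : ∀ i, ν i {x : Fin d → ℝ | ¬ ∀ m, 0 ≤ x m} = 0)
    (hνconc : ∀ i, ν i {x : Fin d → ℝ | x i ≠ 0} = 0)
    (hνpair : ∀ i j : Fin d, i ≠ j → ν i {x : Fin d → ℝ | x i = 0 ∧ x j = 0} = 0)
    (φ : (Fin d → ℝ) → ℝ) (hφ : ∀ θ, φ θ = ∫ x, Real.exp (θ ⬝ᵥ x) ∂π)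
    (φb : Fin d → (Fin d → ℝ) → ℝ)
    (hφb : ∀ i θ, φb i θ = ∫ x, Real.exp (θ ⬝ᵥ x) ∂(ν i))
    (hBAR : ∀ θ : Fin d → ℝ, (∀ m, θ m ≤ 0) →
      (-(1/2 : ℝ) * (θ ⬝ᵥ S.mulVec θ) - μ ⬝ᵥ θ) * φ θ
        = ∑ i, ((fun m => R m i) ⬝ᵥ θ) * φb i θ)
    (j : Fin d) (hSjj : 0 < S j j) :
    π {x : Fin d → ℝ | x j = 0} = 0
    ∧ ∀ θ : Fin d → ℝ, (∀ m, θ m ≤ 0) →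
        Tendsto (fun t : ℝ => -((1/2 : ℝ) * S j j * t + μ j) * φ (Function.update θ j t))
          atBot (nhds (R j j * φb j θ)) := by
  have hmaster : ∀ θ : Fin d → ℝ, (∀ m, θ m ≤ 0) →
      Tendsto (fun t => φ (Function.update θ j t)) atBot (𝓝 0) ∧
      Tendsto (fun t : ℝ => -((1/2 : ℝ) * S j j * t + μ j) * φ (Function.update θ j t))
        atBot (𝓝 (R j j * φb j θ)) := by
    intro θ hθ
    obtain ⟨a, ha⟩ : ∃ a : ℝ,
        a = (Pi.single j 1 : Fin d → ℝ) ⬝ᵥ S.mulVec (Function.update θ j 0) := ⟨_, rfl⟩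
    obtain ⟨q, hq0⟩ : ∃ q : ℝ,
        q = Function.update θ j 0 ⬝ᵥ S.mulVec (Function.update θ j 0) := ⟨_, rfl⟩
    obtain ⟨m0, hm0⟩ : ∃ m0 : ℝ, m0 = Function.update θ j 0 ⬝ᵥ μ := ⟨_, rfl⟩
    obtain ⟨r, hr⟩ : ∃ r : Fin d → ℝ,
        r = fun i => Function.update θ j 0 ⬝ᵥ (fun m => R m i) := ⟨_, rfl⟩
    have hsym : Function.update θ j 0 ⬝ᵥ S.mulVec (Pi.single j 1 : Fin d → ℝ)
        = (Pi.single j 1 : Fin d → ℝ) ⬝ᵥ S.mulVec (Function.update θ j 0) := by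
      rw [Matrix.dotProduct_mulVec]
      conv_lhs => rw [← hSsymm]
      rw [Matrix.vecMul_transpose, dotProduct_comm]
    have hjj : (Pi.single j 1 : Fin d → ℝ) ⬝ᵥ S.mulVec (Pi.single j 1 : Fin d → ℝ)
        = S j j := by
      rw [Matrix.mulVec_single, single_dotProduct]
      simp
    have hquad : ∀ t : ℝ, Function.update θ j t ⬝ᵥ S.mulVec (Function.update θ j t)
        = S j j * (t * t) + 2 * a * t + q := by
      intro t
      rw [bar_update_eq_add_single θ j t]
      simp only [Matrix.mulVec_add, Matrix.mulVec_smul, add_dotProduct,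
        smul_dotProduct, dotProduct_add, dotProduct_smul, smul_eq_mul]
      rw [hsym, hjj, ← ha, ← hq0]
      ring
    have hmu : ∀ t : ℝ, μ ⬝ᵥ Function.update θ j t = m0 + t * μ j := by
      intro t
      rw [dotProduct_comm, bar_update_dot, ← hm0]
    have hcol : ∀ (i : Fin d) (t : ℝ),
        (fun m => R m i) ⬝ᵥ Function.update θ j t = r i + t * R j i := by
      intro i t
      rw [dotProduct_comm, bar_update_dot]
      simp [hr]
    have hE : ∀ t : ℝ, t ≤ 0 →
        ∑ i, (r i + t * R j i) * φb i (Function.update θ j t)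
          + (a * t + ((1/2 : ℝ) * q + m0)) * φ (Function.update θ j t)
        = t * (-((1/2 : ℝ) * S j j * t + μ j) * φ (Function.update θ j t)) := by
      intro t ht
      have h := hBAR (Function.update θ j t) (bar_update_le hθ ht)
      rw [hquad t, hmu t] at h
      simp only [hcol] at h
      linear_combination -h
    have hπtend : Tendsto (fun t => φ (Function.update θ j t)) atBot
        (𝓝 (∫ x, Set.indicator {y : Fin d → ℝ | y j = 0}
          (fun y => Real.exp (Function.update θ j 0 ⬝ᵥ y)) x ∂π)) := by
      simp only [hφ]
      exact bar_tendsto_int_update π hπsupp θ hθ j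
    have hφbbd : ∀ i : Fin d,
        IsBoundedUnder (· ≤ ·) atBot (fun t : ℝ => ‖φb i (Function.update θ j t)‖) := by
      intro i
      haveI := hνfin i
      refine ⟨((ν i) Set.univ).toReal, ?_⟩
      rw [Filter.eventually_map]
      filter_upwards [eventually_le_atBot (0:ℝ)] with t ht
      rw [hφb]
      exact bar_norm_int_le (ν i) (hνsupp i) (bar_update_le hθ ht)
    have hφbtend0 : ∀ i : Fin d, i ≠ j →
        Tendsto (fun t : ℝ => φb i (Function.update θ j t)) atBot (𝓝 0) := by
      intro i hij
      haveI := hνfin i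
      have h1 := bar_tendsto_int_update (ν i) (hνsupp i) θ hθ j
      have h2 : (∫ x, Set.indicator {y : Fin d → ℝ | y j = 0}
          (fun y => Real.exp (Function.update θ j 0 ⬝ᵥ y)) x ∂(ν i)) = 0 := by
        have hai : ∀ᵐ x ∂(ν i), x i = 0 := by
          rw [MeasureTheory.ae_iff]; simpa using hνconc i
        have haj : ∀ᵐ x ∂(ν i), ¬ (x i = 0 ∧ x j = 0) := by
          rw [MeasureTheory.ae_iff]; simpa [not_not] using hνpair i j hij
        have hae : (fun x => Set.indicator {y : Fin d → ℝ | y j = 0}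
            (fun y => Real.exp (Function.update θ j 0 ⬝ᵥ y)) x) =ᵐ[ν i] (fun _ => (0:ℝ)) := by
          filter_upwards [hai, haj] with x hx1 hx2
          have hmem : x ∉ {y : Fin d → ℝ | y j = 0} := fun hm => hx2 ⟨hx1, hm⟩
          exact Set.indicator_of_notMem hmem _
        rw [integral_congr_ae hae, integral_zero]
      simp only [hφb]
      rw [← h2]
      exact h1
    have hjconst : ∀ t : ℝ, φb j (Function.update θ j t) = φb j θ := by
      intro t
      rw [hφb, hφb]
      haveI := hνfin j
      refine integral_congr_ae ?_
      have h1 : ∀ᵐ x ∂ν j, x j = 0 := by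
        rw [MeasureTheory.ae_iff]; simpa using hνconc j
      filter_upwards [h1] with x hx
      rw [bar_update_dot, hx, mul_zero, add_zero]
      congr 1
      have h2 : θ ⬝ᵥ x = Function.update θ j 0 ⬝ᵥ x + θ j * x j := by
        conv_lhs => rw [← Function.update_eq_self j θ]
        rw [bar_update_dot]
      rw [h2, hx, mul_zero, add_zero]
    -- Step B : φ (update θ j t) → 0
    have hL : Tendsto (fun t => φ (Function.update θ j t)) atBot (𝓝 0) := by
      have hc : Tendsto (fun t : ℝ => -(1/2 : ℝ) * (S j j + 2*a*t⁻¹ + q*(t⁻¹*t⁻¹))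
          - (m0*(t⁻¹*t⁻¹) + μ j * t⁻¹)) atBot (𝓝 (-(1/2 : ℝ) * S j j)) := by
        have h1 := bar_inv_tendsto
        have h2 := (((tendsto_const_nhds (x := S j j) (f := atBot)).add
          (h1.const_mul (2*a))).add ((h1.mul h1).const_mul q)).const_mul (-(1/2 : ℝ))
        have h3 := ((h1.mul h1).const_mul m0).add (h1.const_mul (μ j))
        have h4 := h2.sub h3
        simpa using h4
      have hG : Tendsto (fun t : ℝ => (-(1/2 : ℝ) * (S j j + 2*a*t⁻¹ + q*(t⁻¹*t⁻¹))
          - (m0*(t⁻¹*t⁻¹) + μ j * t⁻¹)) * φ (Function.update θ j t)) atBot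
          (𝓝 ((-(1/2 : ℝ) * S j j) * (∫ x, Set.indicator {y : Fin d → ℝ | y j = 0}
            (fun y => Real.exp (Function.update θ j 0 ⬝ᵥ y)) x ∂π))) := hc.mul hπtend
      have hH : Tendsto (fun t : ℝ => ∑ i, (r i * (t⁻¹*t⁻¹) + R j i * t⁻¹)
          * φb i (Function.update θ j t)) atBot (𝓝 0) := by
        have hterm : ∀ i ∈ Finset.univ, Tendsto (fun t : ℝ => (r i * (t⁻¹*t⁻¹) + R j i * t⁻¹)
            * φb i (Function.update θ j t)) atBot (𝓝 0) := by
          intro i _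
          refine Tendsto.zero_mul_isBoundedUnder_le ?_ (hφbbd i)
          have h1 := bar_inv_tendsto
          simpa using ((h1.mul h1).const_mul (r i)).add (h1.const_mul (R j i))
        simpa using tendsto_finset_sum Finset.univ hterm
      have hGH : (fun t : ℝ => (-(1/2 : ℝ) * (S j j + 2*a*t⁻¹ + q*(t⁻¹*t⁻¹))
          - (m0*(t⁻¹*t⁻¹) + μ j * t⁻¹)) * φ (Function.update θ j t))
          =ᶠ[atBot] (fun t : ℝ => ∑ i, (r i * (t⁻¹*t⁻¹) + R j i * t⁻¹)
          * φb i (Function.update θ j t)) := by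
        filter_upwards [eventually_lt_atBot (0:ℝ)] with t ht
        have htne : (t:ℝ) ≠ 0 := ht.ne
        have h := hBAR (Function.update θ j t) (bar_update_le hθ ht.le)
        rw [hquad t, hmu t] at h
        simp only [hcol] at h
        have hsum : ∑ i, (r i * (t⁻¹*t⁻¹) + R j i * t⁻¹) * φb i (Function.update θ j t)
            = t⁻¹ * t⁻¹ * ∑ i, (r i + t * R j i) * φb i (Function.update θ j t) := by
          rw [Finset.mul_sum]
          refine Finset.sum_congr rfl fun i _ => ?_
          field_simp
        rw [hsum, ← h]
        field_simp
      have hG2 := Tendsto.congr' hGH.symm hH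
      have heq := tendsto_nhds_unique hG hG2
      have hne : (-(1/2 : ℝ) * S j j) ≠ 0 := by
        have : (0:ℝ) < (1/2 : ℝ) * S j j := by positivity
        linarith
      have hI0 : (∫ x, Set.indicator {y : Fin d → ℝ | y j = 0}
          (fun y => Real.exp (Function.update θ j 0 ⬝ᵥ y)) x ∂π) = 0 := by
        rcases mul_eq_zero.mp heq with h | h
        · exact absurd h hne
        · exact h
      rwa [hI0] at hπtend
    -- Step C : the limit for part (ii)
    have hKlim : Tendsto (fun t : ℝ => ∑ i, (r i * t⁻¹ + R j i) * φb i (Function.update θ j t)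
        + (a + ((1/2 : ℝ) * q + m0) * t⁻¹) * φ (Function.update θ j t)) atBot
        (𝓝 (R j j * φb j θ)) := by
      have hsum : Tendsto (fun t : ℝ => ∑ i, (r i * t⁻¹ + R j i)
          * φb i (Function.update θ j t)) atBot
          (𝓝 (∑ i, if i = j then R j j * φb j θ else 0)) := by
        refine tendsto_finset_sum _ fun i _ => ?_
        rcases eq_or_ne i j with h | hij
        · subst h
          rw [if_pos rfl]
          have hc : Tendsto (fun t : ℝ => r i * t⁻¹ + R i i) atBot (𝓝 (R i i)) := by
            simpa using (bar_inv_tendsto.const_mul (r i)).add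
              (tendsto_const_nhds (x := R i i) (f := atBot))
          have h2 := hc.mul (tendsto_const_nhds (x := φb i θ) (f := atBot))
          exact h2.congr fun t => by rw [hjconst t]
        · rw [if_neg hij]
          have hc : Tendsto (fun t : ℝ => r i * t⁻¹ + R j i) atBot (𝓝 (R j i)) := by
            simpa using (bar_inv_tendsto.const_mul (r i)).add
              (tendsto_const_nhds (x := R j i) (f := atBot))
          have h4 := hc.mul (hφbtend0 i hij)
          rwa [mul_zero] at h4
      have h2 : Tendsto (fun t : ℝ => (a + ((1/2 : ℝ) * q + m0) * t⁻¹)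
          * φ (Function.update θ j t)) atBot (𝓝 0) := by
        have hc : Tendsto (fun t : ℝ => a + ((1/2 : ℝ) * q + m0) * t⁻¹) atBot (𝓝 a) := by
          simpa using (tendsto_const_nhds (x := a) (f := atBot)).add
            (bar_inv_tendsto.const_mul ((1/2 : ℝ) * q + m0))
        have h4 := hc.mul hL
        rwa [mul_zero] at h4
      have h3 := hsum.add h2
      simpa [Finset.sum_ite_eq'] using h3
    have hKev : (fun t : ℝ => ∑ i, (r i * t⁻¹ + R j i) * φb i (Function.update θ j t)
        + (a + ((1/2 : ℝ) * q + m0) * t⁻¹) * φ (Function.update θ j t))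
        =ᶠ[atBot] (fun t : ℝ => -((1/2 : ℝ) * S j j * t + μ j) * φ (Function.update θ j t)) := by
      filter_upwards [eventually_lt_atBot (0:ℝ)] with t ht
      have htne : (t:ℝ) ≠ 0 := ht.ne
      have hE' := hE t ht.le
      have hsum : ∑ i, (r i * t⁻¹ + R j i) * φb i (Function.update θ j t)
          = t⁻¹ * ∑ i, (r i + t * R j i) * φb i (Function.update θ j t) := by
        rw [Finset.mul_sum]
        refine Finset.sum_congr rfl fun i _ => ?_
        have hco : r i * t⁻¹ + R j i = t⁻¹ * (r i + t * R j i) := by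
          field_simp
        rw [hco, mul_assoc]
      have hphi : (a + ((1/2 : ℝ) * q + m0) * t⁻¹) * φ (Function.update θ j t)
          = t⁻¹ * ((a * t + ((1/2 : ℝ) * q + m0)) * φ (Function.update θ j t)) := by
        field_simp
      rw [hsum, hphi, ← mul_add, hE', ← mul_assoc, inv_mul_cancel₀ htne, one_mul]
    exact ⟨hL, Tendsto.congr' hKev hKlim⟩
  refine ⟨?_, fun θ hθ => (hmaster θ hθ).2⟩
  have h0le : ∀ m, (0 : Fin d → ℝ) m ≤ 0 := fun m => le_rfl
  have h1 := (hmaster 0 h0le).1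
  simp only [hφ] at h1
  have h2 := bar_tendsto_int_update π hπsupp 0 h0le j
  have heq := tendsto_nhds_unique h2 h1
  have hupd : Function.update (0 : Fin d → ℝ) j 0 = 0 := by simp
  rw [hupd] at heq
  simp only [zero_dotProduct, Real.exp_zero] at heq
  have hms : MeasurableSet {y : Fin d → ℝ | y j = 0} :=
    measurableSet_eq_fun (measurable_pi_apply j) measurable_const
  rw [show (fun _ : Fin d → ℝ => (1:ℝ)) = (1 : (Fin d → ℝ) → ℝ) from rfl,
    integral_indicator_one hms] at heq
  have := (ENNReal.toReal_eq_zero_iff _).mp heq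
  rcases this with h | h
  · exact h
  · exact absurd h (measure_ne_top π _)
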